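/- In a Lie algebra with an ad-invariant nondegenerate symmetric bilinear form and abelian commutator ideal, for all x ∈ [g,g] and all u ∈ g one has [u,x] ∈ z(g). -/
import Mathlib


/-- In a Lie algebra with abelian commutator ideal and an ad-invariant nondegenerate
symmetric bilinear form, for all x ∈ [g,g] and u ∈ g one has [u,x] ∈ z(g). -/
theorem bracket_commutator_mem_center
    {K L : Type*} [Field K] [CharZero K] [LieRing L] [LieAlgebra K L]
    [FiniteDimensional K L]
    (hsolv : LieAlgebra.derivedSeries K L 2 = ⊥)
    (B : L →ₗ[K] L →ₗ[K] K)
    (hsymm : ∀ x y : L, B x y = B y x)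
    (hnd : ∀ x : L, (∀ y : L, B x y = 0) → x = 0)
    (hinv : ∀ x y z : L, B ⁅x, y⁆ z + B y ⁅x, z⁆ = 0) :
    ∀ u : L, ∀ x ∈ (⁅(⊤ : LieIdeal K L), (⊤ : LieIdeal K L)⁆ : LieIdeal K L),
      ⁅u, x⁆ ∈ LieAlgebra.center K L := by
  have hD1 : LieAlgebra.derivedSeries K L 1
      = (⁅(⊤ : LieIdeal K L), (⊤ : LieIdeal K L)⁆ : LieIdeal K L) := by
    simp [LieAlgebra.derivedSeries_def, LieAlgebra.derivedSeriesOfIdeal_succ,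
      LieAlgebra.derivedSeriesOfIdeal_zero]
  have habel : ∀ a ∈ (⁅(⊤ : LieIdeal K L), (⊤ : LieIdeal K L)⁆ : LieIdeal K L),
      ∀ b ∈ (⁅(⊤ : LieIdeal K L), (⊤ : LieIdeal K L)⁆ : LieIdeal K L), ⁅a, b⁆ = (0 : L) := by
    intro a ha b hb
    have h2 : ⁅a, b⁆ ∈ LieAlgebra.derivedSeries K L 2 := by
      have : LieAlgebra.derivedSeries K L 2
          = ⁅LieAlgebra.derivedSeries K L 1, LieAlgebra.derivedSeries K L 1⁆ := by
        simp [LieAlgebra.derivedSeries_def, LieAlgebra.derivedSeriesOfIdeal_succ]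
      rw [this, hD1]
      exact LieSubmodule.lie_mem_lie ha hb
    rw [hsolv] at h2
    simpa using h2
  intro u x hx
  rw [LieAlgebra.center, LieModule.mem_maxTrivSubmodule]
  intro m
  apply hnd
  intro w
  have h1 := hinv m ⁅u, x⁆ w
  have h2 := hinv x u ⁅m, w⁆
  have hmw : ⁅m, w⁆ ∈ (⁅(⊤ : LieIdeal K L), (⊤ : LieIdeal K L)⁆ : LieIdeal K L) :=
    LieSubmodule.lie_mem_lie (LieSubmodule.mem_top m) (LieSubmodule.mem_top w)
  have hxz : ⁅x, ⁅m, w⁆⁆ = (0 : L) := habel x hx _ hmw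
  have h2' : B ⁅x, u⁆ ⁅m, w⁆ = 0 := by
    rw [hxz] at h2
    simpa using h2
  have h3 : B ⁅u, x⁆ ⁅m, w⁆ = 0 := by
    rw [show (⁅u, x⁆ : L) = -⁅x, u⁆ from (lie_skew u x).symm, map_neg,
      LinearMap.neg_apply, h2', neg_zero]
  rw [h3] at h1
  simpa using h1
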